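/- Let α_1, α_2 ∈ [0, α] with 0 ≤ α < π/2 and tan α ≤ 1/√2. Then 2 cos²((α_1 + α_2)/2) ≥ (sin α_1 + sin α_2)². -/

import Mathlib

theorem trig_inequality (α α₁ α₂ : ℝ) (hα0 : 0 ≤ α) (hα : α < Real.pi / 2)
    (htan : Real.tan α ≤ 1 / Real.sqrt 2)
    (h₁ : α₁ ∈ Set.Icc 0 α) (h₂ : α₂ ∈ Set.Icc 0 α) :
    2 * Real.cos ((α₁ + α₂) / 2) ^ 2 ≥ (Real.sin α₁ + Real.sin α₂) ^ 2 := by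
  obtain ⟨h10, h1a⟩ := h₁
  obtain ⟨h20, h2a⟩ := h₂
  set s := (α₁ + α₂) / 2 with hs
  have hs0 : 0 ≤ s := by positivity
  have hsa : s ≤ α := by simp only [hs]; linarith
  have hpi : s < Real.pi / 2 := lt_of_le_of_lt hsa hα
  have hcos : 0 < Real.cos s :=
    Real.cos_pos_of_mem_Ioo ⟨by linarith [Real.pi_pos], hpi⟩
  have htans : Real.tan s ≤ Real.tan α := by
    rcases eq_or_lt_of_le hsa with h | h
    · rw [h]
    · exact le_of_lt (Real.tan_lt_tan_of_nonneg_of_lt_pi_div_two hs0 hα h)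
  have htans2 : Real.tan s ≤ 1 / Real.sqrt 2 := le_trans htans htan
  have hsinpos : 0 ≤ Real.sin s :=
    Real.sin_nonneg_of_nonneg_of_le_pi hs0 (by linarith [Real.pi_pos])
  have htan0 : 0 ≤ Real.tan s := by
    rw [Real.tan_eq_sin_div_cos]; positivity
  have hsq : Real.tan s ^ 2 ≤ 1 / 2 := by
    have := mul_self_le_mul_self htan0 htans2
    have h2 : (1 / Real.sqrt 2) * (1 / Real.sqrt 2) = 1 / 2 := by
      rw [div_mul_div_comm, one_mul, Real.mul_self_sqrt (by norm_num)]
    nlinarith [this, h2]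
  have hsin : Real.sin s = Real.tan s * Real.cos s := by
    rw [Real.tan_eq_sin_div_cos, div_mul_cancel₀ _ (ne_of_gt hcos)]
  have hsin2 : Real.sin s ^ 2 ≤ (1 / 2) * Real.cos s ^ 2 := by
    rw [hsin, mul_pow]
    nlinarith [sq_nonneg (Real.cos s)]
  have hsum : Real.sin α₁ + Real.sin α₂ = 2 * Real.sin s * Real.cos ((α₁ - α₂) / 2) := by
    have e1 : α₁ = s + (α₁ - α₂) / 2 := by rw [hs]; ring
    have e2 : α₂ = s - (α₁ - α₂) / 2 := by rw [hs]; ring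
    rw [e1, e2, Real.sin_add, Real.sin_sub]
    rw [hs]; ring_nf
  rw [ge_iff_le, hsum]
  have hc1 : Real.cos ((α₁ - α₂) / 2) ^ 2 ≤ 1 := Real.cos_sq_le_one _
  nlinarith [sq_nonneg (Real.sin s), sq_nonneg (Real.cos ((α₁ - α₂) / 2)), hsin2, hc1]
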